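/- Let u : ℝ × ℝ → ℝ be twice continuously differentiable, σ, r > 0, b ∈ ℝ, and let l, g : ℝ → ℝ be differentiable. Define T^t(x,t) = -u_x(x,t)·l(t) + a/x + (2b·u(x,t)/(σ²x))·e^{-rt} and T^x(x,t) = u_t(x,t)·l(t) + u(x,t)·l'(t) + g(t) - b·u(x,t)·e^{-rt} + b·(u_x(x,t) + 2r·u(x,t)/(σ²x))·x·e^{-rt}. Then for all x ≠ 0 and all t, D_t T^t + D_x T^x = (2b·e^{-rt}/(σ²x))·(u_t + (1/2)σ²x²·u_xx + r·x·u_x - r·u). -/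

import Mathlib

open Real MeasureTheory

noncomputable def pdx (u : ℝ → ℝ → ℝ) (x t : ℝ) : ℝ := deriv (fun x' => u x' t) x
noncomputable def pdt (u : ℝ → ℝ → ℝ) (x t : ℝ) : ℝ := deriv (fun t' => u x t') t
noncomputable def pdxx (u : ℝ → ℝ → ℝ) (x t : ℝ) : ℝ := deriv (fun x' => pdx u x' t) x

theorem stmt0 (u : ℝ → ℝ → ℝ) (hu : ContDiff ℝ 2 (Function.uncurry u))
    (σ r a b : ℝ) (hσ : 0 < σ) (hr : 0 < r)
    (l g : ℝ → ℝ) (hl : Differentiable ℝ l) (hg : Differentiable ℝ g) :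
    ∀ x : ℝ, x ≠ 0 → ∀ t : ℝ,
      pdt (fun x' t' => -pdx u x' t' * l t' + a / x'
            + (2 * b * u x' t' / (σ ^ 2 * x')) * Real.exp (-r * t')) x t
      + pdx (fun x' t' => pdt u x' t' * l t' + u x' t' * deriv l t' + g t'
            - b * u x' t' * Real.exp (-r * t')
            + b * (pdx u x' t' + 2 * r * u x' t' / (σ ^ 2 * x')) * x' * Real.exp (-r * t')) x t
      = (2 * b * Real.exp (-r * t) / (σ ^ 2 * x))
        * (pdt u x t + (1 / 2) * σ ^ 2 * x ^ 2 * pdxx u x t + r * x * pdx u x t - r * u x t) := by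
  intro x hx t
  set F : ℝ × ℝ → ℝ := Function.uncurry u with hF
  have hFd : Differentiable ℝ F := hu.differentiable (by norm_num)
  have hF1 : ContDiff ℝ 1 (fderiv ℝ F) := hu.fderiv_right (by norm_num)
  have hFd' : Differentiable ℝ (fderiv ℝ F) := hF1.differentiable (by norm_num)
  -- first partials
  have hline : ∀ x' t' : ℝ, HasDerivAt (fun y : ℝ => (y, t')) ((1 : ℝ), (0 : ℝ)) x' :=
    fun x' t' => (hasDerivAt_id x').prodMk (hasDerivAt_const x' t')
  have hlinet : ∀ x' t' : ℝ, HasDerivAt (fun y : ℝ => (x', y)) ((0 : ℝ), (1 : ℝ)) t' :=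
    fun x' t' => (hasDerivAt_const t' x').prodMk (hasDerivAt_id t')
  have hux : ∀ x' t' : ℝ, HasDerivAt (fun y => u y t') (fderiv ℝ F (x', t') (1, 0)) x' :=
    fun x' t' => by have := ((hFd (x', t')).hasFDerivAt.comp_hasDerivAt x' (hline x' t')); exact this
  have hut : ∀ x' t' : ℝ, HasDerivAt (fun y => u x' y) (fderiv ℝ F (x', t') (0, 1)) t' :=
    fun x' t' => ((hFd (x', t')).hasFDerivAt.comp_hasDerivAt t' (hlinet x' t'))
  have hpdx : ∀ x' t' : ℝ, pdx u x' t' = fderiv ℝ F (x', t') (1, 0) :=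
    fun x' t' => (hux x' t').deriv
  have hpdt : ∀ x' t' : ℝ, pdt u x' t' = fderiv ℝ F (x', t') (0, 1) :=
    fun x' t' => (hut x' t').deriv
  -- second partials
  have hD2x : ∀ (v : ℝ × ℝ) (x' t' : ℝ),
      HasDerivAt (fun y => fderiv ℝ F (y, t') v) (fderiv ℝ (fderiv ℝ F) (x', t') (1, 0) v) x' := by
    intro v x' t'
    have h1 : HasDerivAt (fun y => fderiv ℝ F (y, t'))
        (fderiv ℝ (fderiv ℝ F) (x', t') (1, 0)) x' :=
      (hFd' (x', t')).hasFDerivAt.comp_hasDerivAt x' (hline x' t')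
    simpa using h1.clm_apply (hasDerivAt_const x' v)
  have hD2t : ∀ (v : ℝ × ℝ) (x' t' : ℝ),
      HasDerivAt (fun y => fderiv ℝ F (x', y) v) (fderiv ℝ (fderiv ℝ F) (x', t') (0, 1) v) t' := by
    intro v x' t'
    have h1 : HasDerivAt (fun y => fderiv ℝ F (x', y))
        (fderiv ℝ (fderiv ℝ F) (x', t') (0, 1)) t' :=
      (hFd' (x', t')).hasFDerivAt.comp_hasDerivAt t' (hlinet x' t')
    simpa using h1.clm_apply (hasDerivAt_const t' v)
  have hsymm : ∀ (p : ℝ × ℝ) (v w : ℝ × ℝ),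
      fderiv ℝ (fderiv ℝ F) p v w = fderiv ℝ (fderiv ℝ F) p w v := by
    intro p v w
    exact second_derivative_symmetric (fun y => (hFd y).hasFDerivAt)
      (hFd' p).hasFDerivAt v w
  -- abbreviations at the point (x, t)
  set Ux := fderiv ℝ F (x, t) (1, 0) with hUx
  set Ut := fderiv ℝ F (x, t) (0, 1) with hUt
  set Uxx := fderiv ℝ (fderiv ℝ F) (x, t) (1, 0) (1, 0) with hUxx
  set Uxt := fderiv ℝ (fderiv ℝ F) (x, t) (1, 0) (0, 1) with hUxt
  have hsym : fderiv ℝ (fderiv ℝ F) (x, t) (0, 1) (1, 0) = Uxt := hsymm (x, t) (0, 1) (1, 0)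
  have hpdxx : pdxx u x t = Uxx := by
    have : HasDerivAt (fun x' => pdx u x' t) Uxx x := by
      have := hD2x (1, 0) x t
      simp only [← hpdx] at this
      exact this
    exact this.deriv
  -- derivative of pdx u in t (mixed partial)
  have hmix_t : HasDerivAt (fun t' => pdx u x t') Uxt t := by
    have := hD2t (1, 0) x t
    simp only [← hpdx] at this
    rw [hsym] at this; exact this
  -- derivative of pdt u in x (mixed partial)
  have hmix_x : HasDerivAt (fun x' => pdt u x' t) Uxt x := by
    have := hD2x (0, 1) x t
    simp only [← hpdt] at this
    exact this
  have hux_x : HasDerivAt (fun x' => pdx u x' t) Uxx x := by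
    have := hD2x (1, 0) x t
    simp only [← hpdx] at this
    exact this
  have hexp : HasDerivAt (fun t' => Real.exp (-r * t')) (Real.exp (-r * t) * (-r)) t := by
    simpa using ((hasDerivAt_id t).const_mul (-r)).exp
  have hσx : σ ^ 2 * x ≠ 0 := mul_ne_zero (pow_ne_zero 2 (ne_of_gt hσ)) hx
  -- compute the t-derivative of T^t
  have hTt : HasDerivAt (fun t' => -pdx u x t' * l t' + a / x
        + (2 * b * u x t' / (σ ^ 2 * x)) * Real.exp (-r * t'))
      ((-Uxt * l t + -pdx u x t * deriv l t) +
        ((2 * b * Ut / (σ ^ 2 * x)) * Real.exp (-r * t)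
          + (2 * b * u x t / (σ ^ 2 * x)) * (Real.exp (-r * t) * (-r)))) t := by
    have h1 : HasDerivAt (fun t' => -pdx u x t' * l t')
        (-Uxt * l t + -pdx u x t * deriv l t) t :=
      (hmix_t.neg).mul (hl t).hasDerivAt
    have h2 : HasDerivAt (fun t' => 2 * b * u x t' / (σ ^ 2 * x) * Real.exp (-r * t'))
        ((2 * b * Ut / (σ ^ 2 * x)) * Real.exp (-r * t)
          + (2 * b * u x t / (σ ^ 2 * x)) * (Real.exp (-r * t) * (-r))) t :=
      (((hut x t).const_mul (2 * b)).div_const (σ ^ 2 * x)).mul hexp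
    exact (h1.add_const (a / x)).add h2
  -- compute the x-derivative of T^x
  have hdiv : HasDerivAt (fun x' => 2 * r * u x' t / (σ ^ 2 * x'))
      ((2 * r * Ux * (σ ^ 2 * x) - 2 * r * u x t * (σ ^ 2 * 1)) / (σ ^ 2 * x) ^ 2) x := by
    exact ((hux x t).const_mul (2 * r)).div ((hasDerivAt_id x).const_mul (σ ^ 2)) hσx
  have hTx : HasDerivAt (fun x' => pdt u x' t * l t + u x' t * deriv l t + g t
        - b * u x' t * Real.exp (-r * t)
        + b * (pdx u x' t + 2 * r * u x' t / (σ ^ 2 * x')) * x' * Real.exp (-r * t))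
      (((Uxt * l t + Ux * deriv l t) - b * Ux * Real.exp (-r * t))
        + (b * (Uxx + (2 * r * Ux * (σ ^ 2 * x) - 2 * r * u x t * (σ ^ 2 * 1)) / (σ ^ 2 * x) ^ 2)
              * x
            + b * (pdx u x t + 2 * r * u x t / (σ ^ 2 * x)) * 1) * Real.exp (-r * t)) x := by
    have h1 : HasDerivAt (fun x' => pdt u x' t * l t + u x' t * deriv l t + g t
          - b * u x' t * Real.exp (-r * t))
        ((Uxt * l t + Ux * deriv l t) - b * Ux * Real.exp (-r * t)) x := by
      have := (((hmix_x.mul_const (l t)).add ((hux x t).mul_const (deriv l t))).add_const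
        (g t)).sub (((hux x t).const_mul b).mul_const (Real.exp (-r * t)))
      simpa [add_zero, Pi.sub_def] using this
    have h2 : HasDerivAt (fun x' => b * (pdx u x' t + 2 * r * u x' t / (σ ^ 2 * x')) * x'
          * Real.exp (-r * t))
        ((b * (Uxx + (2 * r * Ux * (σ ^ 2 * x) - 2 * r * u x t * (σ ^ 2 * 1)) / (σ ^ 2 * x) ^ 2)
            * x + b * (pdx u x t + 2 * r * u x t / (σ ^ 2 * x)) * 1) * Real.exp (-r * t)) x := by
      exact (((hux_x.add hdiv).const_mul b).mul (hasDerivAt_id x)).mul_const (Real.exp (-r * t))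
    exact h1.add h2
  have e1 : pdt (fun x' t' => -pdx u x' t' * l t' + a / x'
        + (2 * b * u x' t' / (σ ^ 2 * x')) * Real.exp (-r * t')) x t
      = ((-Uxt * l t + -pdx u x t * deriv l t) +
        ((2 * b * Ut / (σ ^ 2 * x)) * Real.exp (-r * t)
          + (2 * b * u x t / (σ ^ 2 * x)) * (Real.exp (-r * t) * (-r)))) := by
    simp only [pdt]
    exact hTt.deriv
  have e2 : pdx (fun x' t' => pdt u x' t' * l t' + u x' t' * deriv l t' + g t'
        - b * u x' t' * Real.exp (-r * t')
        + b * (pdx u x' t' + 2 * r * u x' t' / (σ ^ 2 * x')) * x' * Real.exp (-r * t')) x t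
      = (((Uxt * l t + Ux * deriv l t) - b * Ux * Real.exp (-r * t))
        + (b * (Uxx + (2 * r * Ux * (σ ^ 2 * x) - 2 * r * u x t * (σ ^ 2 * 1)) / (σ ^ 2 * x) ^ 2)
              * x
            + b * (pdx u x t + 2 * r * u x t / (σ ^ 2 * x)) * 1) * Real.exp (-r * t)) := by
    simp only [pdx]
    exact hTx.deriv
  rw [e1, e2, hpdxx, hpdx x t, hpdt x t]
  have hx2 : x ≠ 0 := hx
  have hσ2 : (σ : ℝ) ^ 2 ≠ 0 := pow_ne_zero 2 (ne_of_gt hσ)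
  field_simp
  ring
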